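/- Suppose f, g : S → F are linearly independent and satisfy f(x·σ(y)) = f(x)g(y) − g(x)f(y) + γ·f(x)f(y) for all x, y. If additionally f(xy) = f(x)g(y) + b·g(x)f(y) + c·f(x)f(y) holds for all x, y with constants b, c ∈ F, then b² = 1. -/
import Mathlib


theorem b_sq_eq_one {S F : Type*} [Semigroup S] [Field F]
    (hchar : (2 : F) ≠ 0)
    (σ : S → S) (hsurj : Function.Surjective σ)
    (hanti : ∀ x y : S, σ (x * y) = σ y * σ x)
    (hinv : ∀ x : S, σ (σ x) = x)
    (γ b c : F) (f g : S → F)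
    (hli : LinearIndependent F ![f, g])
    (heq : ∀ x y : S, f (x * σ y) = f x * g y - g x * f y + γ * (f x * f y))
    (hxy : ∀ x y : S, f (x * y) = f x * g y + b * (g x * f y) + c * (f x * f y)) :
    b ^ 2 = 1 := by
  have key : ∀ a β : F, (∀ x, a * f x + β * g x = 0) → a = 0 ∧ β = 0 := by
    intro a β h
    refine LinearIndependent.pair_iff.mp hli a β (funext fun x => ?_)
    simpa [mul_comm] using h x
  have hfne : ∃ y, f y ≠ 0 := by
    by_contra h
    push_neg at h
    have := (key 1 0 (fun x => by simp [h x])).1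
    exact one_ne_zero this
  have haux : ∀ y, g y + c * f y - g (σ y) - γ * f (σ y) = 0 ∧ b * f y + f (σ y) = 0 := by
    intro y
    refine key _ _ (fun x => ?_)
    have h2 := heq x (σ y)
    rw [hinv] at h2
    linear_combination h2 - hxy x y
  have hσf : ∀ y, f (σ y) = -b * f y := fun y => by linear_combination (haux y).2
  have hσg : ∀ y, g (σ y) = g y + (c + γ * b) * f y := fun y => by
    linear_combination -(haux y).1 - γ * hσf y
  have hb0 : b ≠ 0 := by
    intro hb
    obtain ⟨y, hy⟩ := hfne
    obtain ⟨w, hw⟩ := hsurj y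
    have h0 := hσf w
    rw [hb, hw] at h0
    simp at h0
    exact hy h0
  have E : ∀ x y : S, ((b ^ 2 - b) * g y + γ * b ^ 2 * (1 + b) * f y) * f x
      + ((b - b ^ 2) * f y) * g x = 0 := by
    intro x y
    have h1 : f (σ (x * y)) = -b * f (x * y) := hσf _
    rw [hanti] at h1
    have h2 := hxy (σ y) (σ x)
    rw [hσf x, hσf y, hσg x, hσg y] at h2
    linear_combination h2 - h1 + b * hxy x y
  obtain ⟨y, hy⟩ := hfne
  have h := (key _ _ (fun x => E x y)).2
  have hbb : b - b ^ 2 = 0 := by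
    rcases mul_eq_zero.mp h with h' | h'
    · exact h'
    · exact absurd h' hy
  have hb1 : b = 1 := by
    have h2 : b * (1 - b) = 0 := by linear_combination hbb
    rcases mul_eq_zero.mp h2 with h' | h'
    · exact absurd h' hb0
    · linear_combination -h'
  rw [hb1]; ring
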